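/- Let a > b > 0 and let γ = α × β. The function G = (α₁ω₁ + α₂ω₂ + ½α₃ω₃)² + (β₁ω₁ + β₂ω₂ + ½β₃ω₃)² + ω₃(γ₁ω₁ + γ₂ω₂ + ½γ₃ω₃) − α₁b² − β₂a² has vanishing directional derivative along the vector field of the Kowalevski two-field equations at every point of ℝ⁹ satisfying the geometric constraints |α|² = a², |β|² = b², α·β = 0. Consequently G is constant along every solution lying on this constraint set. -/

import Mathlib

noncomputable section

/-- Euclidean dot product on ℝ³ (represented as `ℝ × ℝ × ℝ`). -/
def dot3 (u v : ℝ × ℝ × ℝ) : ℝ := u.1 * v.1 + u.2.1 * v.2.1 + u.2.2 * v.2.2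

/-- Cross product on ℝ³ (represented as `ℝ × ℝ × ℝ`). -/
def cross3 (u v : ℝ × ℝ × ℝ) : ℝ × ℝ × ℝ :=
  (u.2.1 * v.2.2 - u.2.2 * v.2.1,
   u.2.2 * v.1 - u.1 * v.2.2,
   u.1 * v.2.1 - u.2.1 * v.1)

/-- The vector field of the Kowalevski two-field equations on ℝ⁹ = ℝ³ × ℝ³ × ℝ³,
with coordinates `(ω, α, β)`. -/
def kowField (v : (ℝ × ℝ × ℝ) × (ℝ × ℝ × ℝ) × (ℝ × ℝ × ℝ)) :
    (ℝ × ℝ × ℝ) × (ℝ × ℝ × ℝ) × (ℝ × ℝ × ℝ) :=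
  (((v.1.2.1 * v.1.2.2 + v.2.2.2.2) / 2,
    (-(v.1.1 * v.1.2.2) - v.2.1.2.2) / 2,
    v.2.1.2.1 - v.2.2.1),
   cross3 v.2.1 v.1,
   cross3 v.2.2 v.1)

/-- The integral `G` (with `γ = α × β`):
`G = (α·ω½)² + (β·ω½)² + ω₃(γ₁ω₁ + γ₂ω₂ + ½γ₃ω₃) − α₁b² − β₂a²`. -/
def Gfun (a b : ℝ) (v : (ℝ × ℝ × ℝ) × (ℝ × ℝ × ℝ) × (ℝ × ℝ × ℝ)) : ℝ :=
  (v.2.1.1 * v.1.1 + v.2.1.2.1 * v.1.2.1 + (1 / 2) * v.2.1.2.2 * v.1.2.2) ^ 2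
    + (v.2.2.1 * v.1.1 + v.2.2.2.1 * v.1.2.1 + (1 / 2) * v.2.2.2.2 * v.1.2.2) ^ 2
    + v.1.2.2 * ((cross3 v.2.1 v.2.2).1 * v.1.1 + (cross3 v.2.1 v.2.2).2.1 * v.1.2.1
        + (1 / 2) * (cross3 v.2.1 v.2.2).2.2 * v.1.2.2)
    - v.2.1.1 * b ^ 2 - v.2.2.2.1 * a ^ 2

/-- A solution of the Kowalevski two-field equations, by components. -/
def KowSol (ω1 ω2 ω3 a1 a2 a3 b1 b2 b3 : ℝ → ℝ) : Prop :=
  (∀ t, HasDerivAt ω1 ((ω2 t * ω3 t + b3 t) / 2) t) ∧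
  (∀ t, HasDerivAt ω2 ((-(ω1 t * ω3 t) - a3 t) / 2) t) ∧
  (∀ t, HasDerivAt ω3 (a2 t - b1 t) t) ∧
  (∀ t, HasDerivAt a1 (a2 t * ω3 t - a3 t * ω2 t) t) ∧
  (∀ t, HasDerivAt a2 (a3 t * ω1 t - a1 t * ω3 t) t) ∧
  (∀ t, HasDerivAt a3 (a1 t * ω2 t - a2 t * ω1 t) t) ∧
  (∀ t, HasDerivAt b1 (b2 t * ω3 t - b3 t * ω2 t) t) ∧
  (∀ t, HasDerivAt b2 (b3 t * ω1 t - b1 t * ω3 t) t) ∧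
  (∀ t, HasDerivAt b3 (b1 t * ω2 t - b2 t * ω1 t) t)

/-- Key computation: along any nine functions satisfying the Kowalevski equations at a
point `t` where the geometric constraints hold, the composite `G ∘ sol` has derivative 0. -/
lemma kow_deriv_G_zero (a b : ℝ) (w1 w2 w3 a1 a2 a3 b1 b2 b3 : ℝ → ℝ) (t : ℝ)
    (h1 : HasDerivAt w1 ((w2 t * w3 t + b3 t) / 2) t)
    (h2 : HasDerivAt w2 ((-(w1 t * w3 t) - a3 t) / 2) t)
    (h3 : HasDerivAt w3 (a2 t - b1 t) t)
    (h4 : HasDerivAt a1 (a2 t * w3 t - a3 t * w2 t) t)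
    (h5 : HasDerivAt a2 (a3 t * w1 t - a1 t * w3 t) t)
    (h6 : HasDerivAt a3 (a1 t * w2 t - a2 t * w1 t) t)
    (h7 : HasDerivAt b1 (b2 t * w3 t - b3 t * w2 t) t)
    (h8 : HasDerivAt b2 (b3 t * w1 t - b1 t * w3 t) t)
    (h9 : HasDerivAt b3 (b1 t * w2 t - b2 t * w1 t) t)
    (ca : a1 t ^ 2 + a2 t ^ 2 + a3 t ^ 2 = a ^ 2)
    (cb : b1 t ^ 2 + b2 t ^ 2 + b3 t ^ 2 = b ^ 2)
    (cab : a1 t * b1 t + a2 t * b2 t + a3 t * b3 t = 0) :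
    HasDerivAt (fun s => Gfun a b ((w1 s, w2 s, w3 s), (a1 s, a2 s, a3 s), (b1 s, b2 s, b3 s)))
      0 t := by
  show HasDerivAt (fun s =>
      (a1 s * w1 s + a2 s * w2 s + (1 / 2) * a3 s * w3 s) ^ 2
        + (b1 s * w1 s + b2 s * w2 s + (1 / 2) * b3 s * w3 s) ^ 2
        + w3 s * ((a2 s * b3 s - a3 s * b2 s) * w1 s + (a3 s * b1 s - a1 s * b3 s) * w2 s
            + (1 / 2) * (a1 s * b2 s - a2 s * b1 s) * w3 s)
        - a1 s * b ^ 2 - b2 s * a ^ 2) 0 t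
  have hA := ((h4.mul h1).add (h5.mul h2)).add ((h6.const_mul (1 / 2 : ℝ)).mul h3)
  have hB := ((h7.mul h1).add (h8.mul h2)).add ((h9.const_mul (1 / 2 : ℝ)).mul h3)
  have hC := ((((h5.mul h9).sub (h6.mul h8)).mul h1).add
      (((h6.mul h7).sub (h4.mul h9)).mul h2)).add
      ((((h4.mul h8).sub (h5.mul h7)).const_mul (1 / 2 : ℝ)).mul h3)
  have H := ((((hA.pow 2).add (hB.pow 2)).add (h3.mul hC)).sub
      (h4.mul_const (b ^ 2))).sub (h8.mul_const (a ^ 2))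
  refine H.congr_deriv ?_
  push_cast
  simp only [Pi.add_apply, Pi.mul_apply, Pi.sub_apply]
  linear_combination (w1 t * b3 t - w3 t * b1 t) * ca
    + (w3 t * a2 t - w2 t * a3 t) * cb
    + (w3 t * a1 t - w3 t * b2 t + w2 t * b3 t - w1 t * a3 t) * cab

/-- On the constraint set `|α|² = a²`, `|β|² = b²`, `α·β = 0`, the directional derivative
of `G` along the Kowalevski vector field vanishes; consequently `G` is constant along
every solution lying on this constraint set. -/
theorem G_first_integral_on_constraints (a b : ℝ) (hab : b < a) (hb : 0 < b) :
    (∀ v : (ℝ × ℝ × ℝ) × (ℝ × ℝ × ℝ) × (ℝ × ℝ × ℝ),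
      dot3 v.2.1 v.2.1 = a ^ 2 → dot3 v.2.2 v.2.2 = b ^ 2 → dot3 v.2.1 v.2.2 = 0 →
      fderiv ℝ (Gfun a b) v (kowField v) = 0) ∧
    (∀ ω1 ω2 ω3 a1 a2 a3 b1 b2 b3 : ℝ → ℝ,
      KowSol ω1 ω2 ω3 a1 a2 a3 b1 b2 b3 →
      (∀ t, a1 t ^ 2 + a2 t ^ 2 + a3 t ^ 2 = a ^ 2) →
      (∀ t, b1 t ^ 2 + b2 t ^ 2 + b3 t ^ 2 = b ^ 2) →
      (∀ t, a1 t * b1 t + a2 t * b2 t + a3 t * b3 t = 0) →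
      ∀ t t' : ℝ,
        Gfun a b ((ω1 t, ω2 t, ω3 t), (a1 t, a2 t, a3 t), (b1 t, b2 t, b3 t))
          = Gfun a b ((ω1 t', ω2 t', ω3 t'), (a1 t', a2 t', a3 t'), (b1 t', b2 t', b3 t'))) := by
  constructor
  · intro v ha hbv hab'
    set w := kowField v with hw
    -- the straight line through v with direction w
    have hkey : HasDerivAt (fun s : ℝ =>
        Gfun a b ((v.1.1 + s * w.1.1, v.1.2.1 + s * w.1.2.1, v.1.2.2 + s * w.1.2.2),
          (v.2.1.1 + s * w.2.1.1, v.2.1.2.1 + s * w.2.1.2.1, v.2.1.2.2 + s * w.2.1.2.2),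
          (v.2.2.1 + s * w.2.2.1, v.2.2.2.1 + s * w.2.2.2.1, v.2.2.2.2 + s * w.2.2.2.2))) 0 0 := by
      have base : ∀ p q : ℝ, HasDerivAt (fun s : ℝ => p + s * q) q 0 := fun p q => by
        simpa using ((hasDerivAt_id (0 : ℝ)).mul_const q).const_add p
      apply kow_deriv_G_zero a b
      · exact (base _ _).congr_deriv (by simp [hw, kowField] <;> ring)
      · exact (base _ _).congr_deriv (by simp [hw, kowField] <;> ring)
      · exact (base _ _).congr_deriv (by simp [hw, kowField, cross3] <;> ring)
      · exact (base _ _).congr_deriv (by simp [hw, kowField, cross3] <;> ring)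
      · exact (base _ _).congr_deriv (by simp [hw, kowField, cross3] <;> ring)
      · exact (base _ _).congr_deriv (by simp [hw, kowField, cross3] <;> ring)
      · exact (base _ _).congr_deriv (by simp [hw, kowField, cross3] <;> ring)
      · exact (base _ _).congr_deriv (by simp [hw, kowField, cross3] <;> ring)
      · exact (base _ _).congr_deriv (by simp [hw, kowField, cross3] <;> ring)
      · have := ha
        simp [dot3] at this
        nlinarith [this]
      · have := hbv
        simp [dot3] at this
        nlinarith [this]
      · have := hab'
        simp [dot3] at this
        nlinarith [this]
    have hdiff : DifferentiableAt ℝ (Gfun a b) v := by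
      unfold Gfun cross3
      fun_prop
    have hline : HasDerivAt (fun s : ℝ => v + s • w) w 0 := by
      simpa using ((hasDerivAt_id (0 : ℝ)).smul_const w).const_add v
    have h0 : v + (0 : ℝ) • w = v := by simp
    have hF := hdiff.hasFDerivAt
    rw [← h0] at hF
    have hcomp := hF.comp_hasDerivAt 0 hline
    rw [h0] at hcomp
    have hpt : ∀ s : ℝ, v + s • w =
        (((v.1.1 + s * w.1.1, v.1.2.1 + s * w.1.2.1, v.1.2.2 + s * w.1.2.2),
          (v.2.1.1 + s * w.2.1.1, v.2.1.2.1 + s * w.2.1.2.1, v.2.1.2.2 + s * w.2.1.2.2),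
          (v.2.2.1 + s * w.2.2.1, v.2.2.2.1 + s * w.2.2.2.1, v.2.2.2.2 + s * w.2.2.2.2)) :
          (ℝ × ℝ × ℝ) × (ℝ × ℝ × ℝ) × (ℝ × ℝ × ℝ)) := by
      intro s
      simp [Prod.ext_iff]
    have heq : (Gfun a b ∘ fun s : ℝ => v + s • w) = fun s : ℝ =>
        Gfun a b ((v.1.1 + s * w.1.1, v.1.2.1 + s * w.1.2.1, v.1.2.2 + s * w.1.2.2),
          (v.2.1.1 + s * w.2.1.1, v.2.1.2.1 + s * w.2.1.2.1, v.2.1.2.2 + s * w.2.1.2.2),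
          (v.2.2.1 + s * w.2.2.1, v.2.2.2.1 + s * w.2.2.2.1, v.2.2.2.2 + s * w.2.2.2.2)) := by
      funext s
      simp only [Function.comp_apply]
      rw [hpt s]
    rw [heq] at hcomp
    exact (hkey.unique hcomp).symm
  · intro ω1 ω2 ω3 a1 a2 a3 b1 b2 b3 hsol hca hcb hcab t t'
    obtain ⟨H1, H2, H3, H4, H5, H6, H7, H8, H9⟩ := hsol
    have key : ∀ s : ℝ, HasDerivAt (fun u =>
        Gfun a b ((ω1 u, ω2 u, ω3 u), (a1 u, a2 u, a3 u), (b1 u, b2 u, b3 u))) 0 s := fun s =>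
      kow_deriv_G_zero a b ω1 ω2 ω3 a1 a2 a3 b1 b2 b3 s (H1 s) (H2 s) (H3 s) (H4 s) (H5 s)
        (H6 s) (H7 s) (H8 s) (H9 s) (hca s) (hcb s) (hcab s)
    exact is_const_of_deriv_eq_zero (fun s => (key s).differentiableAt)
      (fun s => (key s).deriv) t t'
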